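/- Let H be a nonempty axis-aligned region in ℝ^{n₁}×⋯×ℝ^{n_k} and let M : ℝ^{n₁}×⋯×ℝ^{n_k} → ℝ be multilinear. Then for every x ∈ H, the point (x, M(x)) lies in the convex hull of the finite set {(v, M(v)) : v ∈ corner(H)}. -/

import Mathlib

/-- `M` is multilinear in the block variables: fixing all blocks except the `j`-th yields an
affine map `ℝ^{n_j} → ℝ`. -/
def IsBlockMultilinear {k : ℕ} {n : Fin k → ℕ}
    (M : ((j : Fin k) → (Fin (n j) → ℝ)) → ℝ) : Prop :=
  ∀ (j : Fin k) (x : (j : Fin k) → Fin (n j) → ℝ),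
    ∃ A : (Fin (n j) → ℝ) →ᵃ[ℝ] ℝ, ∀ y : Fin (n j) → ℝ, M (Function.update x j y) = A y

/-- An axis-aligned region in `ℝ^{n₁} × ⋯ × ℝ^{n_k}`: a finite union of products of
polytopes (convex hulls of nonempty finite sets), one polytope per block. -/
def IsBlockAxisAligned {k : ℕ} {n : Fin k → ℕ}
    (H : Set ((j : Fin k) → Fin (n j) → ℝ)) : Prop :=
  ∃ (N : ℕ) (V : Fin N → (j : Fin k) → Finset (Fin (n j) → ℝ)),
    (∀ i j, (V i j).Nonempty) ∧
    H = ⋃ i : Fin N, {x | ∀ j, x j ∈ convexHull ℝ ((V i j : Set (Fin (n j) → ℝ)))}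

/-- The corner points of a region `H`: points of `H` each of whose block coordinates is an
extreme point of the convex hull of the corresponding slice of `H`. -/
def blockCornerSet {k : ℕ} {n : Fin k → ℕ}
    (H : Set ((j : Fin k) → Fin (n j) → ℝ)) : Set ((j : Fin k) → Fin (n j) → ℝ) :=
  {v | v ∈ H ∧ ∀ j, v j ∈ Set.extremePoints ℝ
    (convexHull ℝ {y : Fin (n j) → ℝ | Function.update v j y ∈ H})}

/-- Auxiliary affine map `y ↦ (update g j y, A y)`. -/
noncomputable def graphUpdateAff {k : ℕ} {n : Fin k → ℕ}
    (g : (j : Fin k) → Fin (n j) → ℝ) (j : Fin k)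
    (A : (Fin (n j) → ℝ) →ᵃ[ℝ] ℝ) :
    (Fin (n j) → ℝ) →ᵃ[ℝ] (((j : Fin k) → Fin (n j) → ℝ) × ℝ) where
  toFun y := (Function.update g j y, A y)
  linear := (LinearMap.single ℝ (fun j' => Fin (n j') → ℝ) j).prod A.linear
  map_vadd' p v := by
    have h1 : Function.update g j (v + p) = Pi.single j v + Function.update g j p := by
      funext j'
      by_cases h : j' = j
      · subst h; simp
      · simp [Function.update_of_ne h, Pi.single_eq_of_ne h]
    have h2 : A (v + p) = A.linear v + A p := by
      have := A.map_vadd' p v; simpa using this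
    show (Function.update g j (v + p), A (v + p)) =
      (Pi.single j v, A.linear v) + (Function.update g j p, A p)
    rw [Prod.mk_add_mk, h1, h2]

/-- Every point of the graph of a multilinear function over a nonempty axis-aligned region
`H` lies in the convex hull of the finite set of graph points over the corner points of `H`. -/
theorem multilinear_graph_in_hull_of_corner_points
    (k : ℕ) (hk : 0 < k) (n : Fin k → ℕ) (hn : ∀ j, 0 < n j)
    (H : Set ((j : Fin k) → Fin (n j) → ℝ)) (hne : H.Nonempty)
    (hH : IsBlockAxisAligned H)
    (M : ((j : Fin k) → (Fin (n j) → ℝ)) → ℝ) (hM : IsBlockMultilinear M) :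
    (blockCornerSet H).Finite ∧
    ∀ x ∈ H, (x, M x) ∈
      convexHull ℝ ((fun v : (j : Fin k) → Fin (n j) → ℝ => (v, M v)) ''
        blockCornerSet H) := by
  classical
  obtain ⟨N, V, hVne, hHeq⟩ := hH
  set Γ : ((j : Fin k) → Fin (n j) → ℝ) → (((j : Fin k) → Fin (n j) → ℝ) × ℝ) :=
    fun v => (v, M v) with hΓ
  set S : (j : Fin k) → Finset (Fin (n j) → ℝ) :=
    fun j => Finset.univ.biUnion (fun i : Fin N => V i j) with hS
  set G : Set ((j : Fin k) → Fin (n j) → ℝ) :=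
    Set.pi Set.univ (fun j => ((S j : Set (Fin (n j) → ℝ)))) with hG
  have hGfin : G.Finite := Set.Finite.pi fun j => (S j).finite_toSet
  set T : Set ((j : Fin k) → Fin (n j) → ℝ) := H ∩ G with hT
  have hTfin : T.Finite := hGfin.subset Set.inter_subset_right
  set P : Set (((j : Fin k) → Fin (n j) → ℝ) × ℝ) := convexHull ℝ (Γ '' T) with hP
  -- the slice of `H` at any `g ∈ H` in direction `j` has convex hull a polytope with
  -- vertex candidates among `S j`, all of which lie in the slice.
  have key : ∀ g ∈ H, ∀ j : Fin k, ∃ W : Finset (Fin (n j) → ℝ),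
      ((W : Set (Fin (n j) → ℝ)) ⊆ (S j : Set (Fin (n j) → ℝ))) ∧
      (∀ w ∈ W, Function.update g j w ∈ H) ∧
      convexHull ℝ {y : Fin (n j) → ℝ | Function.update g j y ∈ H}
        = convexHull ℝ (W : Set (Fin (n j) → ℝ)) := by
    intro g hg j
    set I : Finset (Fin N) :=
      Finset.univ.filter
        (fun i => ∀ j' : Fin k, j' ≠ j → g j' ∈ convexHull ℝ ((V i j' : Set _))) with hI
    set W : Finset (Fin (n j) → ℝ) := I.biUnion (fun i => V i j) with hW
    have hWS : (W : Set (Fin (n j) → ℝ)) ⊆ (S j : Set (Fin (n j) → ℝ)) := by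
      intro w hw
      obtain ⟨i, _, hwi⟩ := Finset.mem_biUnion.1 (Finset.mem_coe.1 hw)
      exact Finset.mem_coe.2 (Finset.mem_biUnion.2 ⟨i, Finset.mem_univ i, hwi⟩)
    have hWH : ∀ w ∈ W, Function.update g j w ∈ H := by
      intro w hw
      obtain ⟨i, hiI, hwi⟩ := Finset.mem_biUnion.1 hw
      rw [hHeq]
      refine Set.mem_iUnion.2 ⟨i, fun j' => ?_⟩
      by_cases h : j' = j
      · subst h; rw [Function.update_self]; exact subset_convexHull ℝ _ hwi
      · rw [Function.update_of_ne h]; exact (Finset.mem_filter.1 hiI).2 j' h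
    refine ⟨W, hWS, hWH, Set.Subset.antisymm ?_ ?_⟩
    · refine convexHull_min ?_ (convex_convexHull ℝ _)
      intro y hy
      have hy' : Function.update g j y ∈ H := hy
      rw [hHeq, Set.mem_iUnion] at hy'
      obtain ⟨i, hi⟩ := hy'
      have hiI : i ∈ I := by
        refine Finset.mem_filter.2 ⟨Finset.mem_univ i, fun j' hj' => ?_⟩
        have := hi j'
        rwa [Function.update_of_ne hj'] at this
      have hyi : y ∈ convexHull ℝ ((V i j : Set _)) := by
        have := hi j
        rwa [Function.update_self] at this
      refine convexHull_mono ?_ hyi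
      intro w hw
      exact Finset.mem_coe.2 (Finset.mem_biUnion.2 ⟨i, hiI, Finset.mem_coe.1 hw⟩)
    · refine convexHull_mono ?_
      intro w hw
      exact hWH w (Finset.mem_coe.1 hw)
  -- graph points over hulls of slices at points of `T` lie in `P`
  have hgraphP : ∀ g ∈ T, ∀ j : Fin k, ∀ y ∈ convexHull ℝ
      {y : Fin (n j) → ℝ | Function.update g j y ∈ H},
      Γ (Function.update g j y) ∈ P := by
    intro g hg j y hy
    obtain ⟨W, hWS, hWH, hWhull⟩ := key g hg.1 j
    obtain ⟨A, hA⟩ := hM j g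
    set F := graphUpdateAff g j A with hF
    have hFy : Γ (Function.update g j y) = F y := by
      show (Function.update g j y, M (Function.update g j y)) = (Function.update g j y, A y)
      rw [hA]
    rw [hWhull] at hy
    have h2 : F y ∈ F '' convexHull ℝ (W : Set _) := Set.mem_image_of_mem _ hy
    rw [AffineMap.image_convexHull] at h2
    rw [hFy]
    refine convexHull_mono ?_ h2
    rintro _ ⟨w, hw, rfl⟩
    refine ⟨Function.update g j w, ⟨hWH w (Finset.mem_coe.1 hw), ?_⟩, ?_⟩
    · intro j' _
      by_cases h : j' = j
      · subst h; rw [Function.update_self]; exact hWS hw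
      · rw [Function.update_of_ne h]; exact hg.2 j' (Set.mem_univ _)
    · show (Function.update g j w, M (Function.update g j w)) = (Function.update g j w, A w)
      rw [hA]
  -- every point of `H` has its graph point in `P`
  have hA_in_P : ∀ x ∈ H, Γ x ∈ P := by
    intro x hx
    rw [hHeq, Set.mem_iUnion] at hx
    obtain ⟨i, hxi⟩ := hx
    have main : ∀ m : ℕ, m ≤ k → Γ x ∈ convexHull ℝ (Γ ''
        {v | (∀ j : Fin k, (j : ℕ) < m → v j ∈ (V i j : Set (Fin (n j) → ℝ))) ∧
             (∀ j : Fin k, m ≤ (j : ℕ) → v j = x j)}) := by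
      intro m
      induction m with
      | zero =>
        intro _
        exact subset_convexHull ℝ _
          ⟨x, ⟨fun j h => absurd h (Nat.not_lt_zero _), fun j _ => rfl⟩, rfl⟩
      | succ m ih =>
        intro hm
        have hmk : m < k := hm
        set jm : Fin k := ⟨m, hmk⟩ with hjm
        have step : Γ '' {v | (∀ j : Fin k, (j : ℕ) < m → v j ∈ (V i j : Set (Fin (n j) → ℝ))) ∧
              (∀ j : Fin k, m ≤ (j : ℕ) → v j = x j)} ⊆
            convexHull ℝ (Γ ''
              {v | (∀ j : Fin k, (j : ℕ) < m + 1 → v j ∈ (V i j : Set (Fin (n j) → ℝ))) ∧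
              (∀ j : Fin k, m + 1 ≤ (j : ℕ) → v j = x j)}) := by
          rintro _ ⟨v, ⟨hv1, hv2⟩, rfl⟩
          obtain ⟨A, hA⟩ := hM jm v
          set F := graphUpdateAff v jm A with hF
          have hvx : Γ v = F (x jm) := by
            have h1 : Function.update v jm (x jm) = v := by
              rw [← hv2 jm le_rfl]
              exact Function.update_eq_self jm v
            show (v, M v) = (Function.update v jm (x jm), A (x jm))
            rw [← hA, h1]
          rw [hvx]
          have h2 : F (x jm) ∈ F '' convexHull ℝ ((V i jm : Set _)) :=
            Set.mem_image_of_mem _ (hxi jm)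
          rw [AffineMap.image_convexHull] at h2
          refine convexHull_mono ?_ h2
          rintro _ ⟨w, hw, rfl⟩
          refine ⟨Function.update v jm w, ⟨?_, ?_⟩, ?_⟩
          · intro j hj
            by_cases h : j = jm
            · subst h; rw [Function.update_self]; exact hw
            · have hjm' : (j : ℕ) < m := by
                have hne' : (j : ℕ) ≠ m := fun he => h (Fin.ext he)
                omega
              rw [Function.update_of_ne h]
              exact hv1 j hjm'
          · intro j hj
            have h : j ≠ jm := by
              intro he
              rw [he] at hj
              have : (jm : ℕ) = m := rfl
              omega
            rw [Function.update_of_ne h]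
            exact hv2 j (by omega)
          · show (Function.update v jm w, M (Function.update v jm w))
              = (Function.update v jm w, A w)
            rw [hA]
        exact convexHull_min step (convex_convexHull ℝ _) (ih (le_of_lt hmk))
    have hk' := main k le_rfl
    refine convexHull_mono ?_ hk'
    rintro _ ⟨v, ⟨hv1, hv2⟩, rfl⟩
    refine ⟨v, ⟨?_, ?_⟩, rfl⟩
    · rw [hHeq]
      exact Set.mem_iUnion.2 ⟨i, fun j => subset_convexHull ℝ _ (hv1 j j.isLt)⟩
    · intro j _
      exact Finset.mem_coe.2
        (Finset.mem_biUnion.2 ⟨i, Finset.mem_univ i, Finset.mem_coe.1 (hv1 j j.isLt)⟩)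
  -- extreme points of `P` are graph points over corner points
  have hExt : Set.extremePoints ℝ P ⊆ Γ '' blockCornerSet H := by
    intro p hp
    have hpT : p ∈ Γ '' T := extremePoints_convexHull_subset hp
    obtain ⟨g, hgT, rfl⟩ := hpT
    refine ⟨g, ⟨hgT.1, fun j => ?_⟩, rfl⟩
    rw [mem_extremePoints]
    constructor
    · apply subset_convexHull
      show Function.update g j (g j) ∈ H
      rw [Function.update_eq_self]
      exact hgT.1
    · intro a ha b hb hseg
      obtain ⟨A, hA⟩ := hM j g
      set F := graphUpdateAff g j A with hF
      have hFmem : ∀ y ∈ convexHull ℝ {y : Fin (n j) → ℝ | Function.update g j y ∈ H},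
          F y ∈ P := by
        intro y hy
        have h1 := hgraphP g hgT j y hy
        have he : Γ (Function.update g j y) = F y := by
          show (Function.update g j y, M (Function.update g j y)) = (Function.update g j y, A y)
          rw [hA]
        rwa [he] at h1
      have hgF : Γ g = F (g j) := by
        show (g, M g) = (Function.update g j (g j), A (g j))
        rw [← hA, Function.update_eq_self]
      have hseg' : Γ g ∈ openSegment ℝ (F a) (F b) := by
        rw [hgF, ← image_openSegment]
        exact Set.mem_image_of_mem _ hseg
      obtain ⟨h1, h2⟩ := (mem_extremePoints.1 hp).2 _ (hFmem a ha) _ (hFmem b hb) hseg'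
      constructor
      · have h3 := congrFun (congrArg Prod.fst h1) j
        have h4 : Function.update g j a j = a := Function.update_self j a g
        rw [show (F a).1 = Function.update g j a from rfl] at h3
        rw [h4] at h3
        exact h3
      · have h3 := congrFun (congrArg Prod.fst h2) j
        have h4 : Function.update g j b j = b := Function.update_self j b g
        rw [show (F b).1 = Function.update g j b from rfl] at h3
        rw [h4] at h3
        exact h3
  -- Minkowski: `P` is the hull of its extreme points
  have hPcomp : IsCompact P := (hTfin.image Γ).isCompact_convexHull (𝕜 := ℝ)
  have hEfin : (Set.extremePoints ℝ P).Finite :=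
    (hTfin.image Γ).subset extremePoints_convexHull_subset
  have hmink : P ⊆ convexHull ℝ (Set.extremePoints ℝ P) := by
    have h1 := closure_convexHull_extremePoints hPcomp (convex_convexHull ℝ _)
    rw [(hEfin.isClosed_convexHull (𝕜 := ℝ)).closure_eq] at h1
    exact h1.ge
  -- finiteness of the corner set
  have hCfin : (blockCornerSet H).Finite := by
    refine hGfin.subset fun v hv => ?_
    intro j _
    obtain ⟨W, hWS, hWH, hWhull⟩ := key v hv.1 j
    have h1 := hv.2 j
    rw [hWhull] at h1
    exact hWS (extremePoints_convexHull_subset h1)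
  refine ⟨hCfin, fun x hx => ?_⟩
  exact convexHull_mono hExt (hmink (hA_in_P x hx))
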